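/- Let R be a discrete valuation ring with fraction field K and uniformizer π, and let B be a commutative R-algebra which is π-torsion-free and such that B/πB is reduced. Then the natural injective map B → B ⊗_R K induces a bijection between the set of idempotent elements of B and the set of idempotent elements of B ⊗_R K. -/

import Mathlib

open TensorProduct

set_option maxHeartbeats 1000000
set_option synthInstance.maxHeartbeats 400000

/-- Let `R` be a DVR with fraction field `K` and uniformizer
`π`, and let `B` be a `π`-torsion-free commutative `R`-algebra with `B/πB`
reduced. Then the natural map `B → B ⊗_R K` induces a bijection between the
idempotents of `B` and those of `B ⊗_R K`. -/
theorem stmt13 {R : Type*} [CommRing R] [IsDomain R] [IsDiscreteValuationRing R]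
    (π : R) (hπ : Irreducible π)
    {B : Type*} [CommRing B] [Algebra R B]
    (htf : ∀ b : B, algebraMap R B π * b = 0 → b = 0)
    (hred : IsReduced (B ⧸ Ideal.span {algebraMap R B π})) :
    Set.BijOn
      (fun b : B => (Algebra.TensorProduct.includeLeft (S := R) b : B ⊗[R] FractionRing R))
      {b : B | IsIdempotentElem b}
      {x : B ⊗[R] FractionRing R | IsIdempotentElem x} := by
  classical
  have hπ0 : π ≠ 0 := hπ.ne_zero
  -- the map b ↦ 1 ⊗ b is a localized module
  haveI : IsLocalizedModule (nonZeroDivisors R)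
      (TensorProduct.mk R (FractionRing R) B 1) :=
    (isLocalizedModule_iff_isBaseChange (nonZeroDivisors R) (FractionRing R) _).mpr
      (TensorProduct.isBaseChange R B (FractionRing R))
  -- torsion-freeness for powers of π
  have htfpow : ∀ (n : ℕ) (b : B), π ^ n • b = 0 → b = 0 := by
    intro n
    induction n with
    | zero => intro b hb; simpa using hb
    | succ n ih =>
      intro b hb
      apply ih
      apply htf
      rw [← Algebra.smul_def, smul_smul, ← pow_succ']
      exact hb
  -- injectivity of b ↦ b ⊗ 1
  have hinj : ∀ b : B, (b ⊗ₜ[R] (1 : FractionRing R)) = 0 → b = 0 := by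
    intro b hb
    have h1 : (TensorProduct.mk R (FractionRing R) B 1) b = 0 := by
      rw [TensorProduct.mk_apply]
      have h2 := congrArg (TensorProduct.comm R B (FractionRing R)) hb
      rwa [TensorProduct.comm_tmul, map_zero] at h2
    obtain ⟨s, hs⟩ := (IsLocalizedModule.eq_zero_iff (nonZeroDivisors R)
      (TensorProduct.mk R (FractionRing R) B 1)).mp h1
    obtain ⟨n, u, hu⟩ := IsDiscreteValuationRing.eq_unit_mul_pow_irreducible
      (nonZeroDivisors.coe_ne_zero s) hπ
    have hs2 : (s : R) • b = 0 := by simpa [Submonoid.smul_def] using hs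
    have hs' : ((u : R) * π ^ n) • b = 0 := by rw [← hu]; exact hs2
    have h2 : π ^ n • b = 0 := by
      have h3 := congrArg (fun x => (↑u⁻¹ : R) • x) hs'
      simpa [smul_smul, ← mul_assoc, Units.inv_mul, one_mul, smul_zero] using h3
    exact htfpow n b h2
  have hinj' : ∀ b c : B,
      (b ⊗ₜ[R] (1 : FractionRing R)) = c ⊗ₜ[R] (1 : FractionRing R) → b = c := by
    intro b c h
    have h0 : (b - c) ⊗ₜ[R] (1 : FractionRing R) = 0 := by
      rw [TensorProduct.sub_tmul, h, sub_self]
    exact sub_eq_zero.mp (hinj _ h0)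
  -- π acts invertibly on B ⊗ K
  have hπK : IsUnit (algebraMap R (FractionRing R) π) := by
    refine isUnit_iff_ne_zero.mpr ?_
    exact fun h => hπ0 (IsFractionRing.injective R (FractionRing R) (by simpa using h))
  have halg : ∀ r : R, algebraMap R (B ⊗[R] FractionRing R) r
      = 1 ⊗ₜ[R] algebraMap R (FractionRing R) r := by
    intro r
    rw [Algebra.TensorProduct.algebraMap_apply, Algebra.algebraMap_eq_smul_one,
      TensorProduct.smul_tmul, ← Algebra.algebraMap_eq_smul_one]
  have hπunit : IsUnit (algebraMap R (B ⊗[R] FractionRing R) π) := by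
    rw [halg]
    exact hπK.map (Algebra.TensorProduct.includeRight (R := R) (A := B))
  have hcancel : ∀ x y : B ⊗[R] FractionRing R, π • x = π • y → x = y := by
    intro x y h
    rw [← algebraMap_smul (B ⊗[R] FractionRing R) π x,
      ← algebraMap_smul (B ⊗[R] FractionRing R) π y, smul_eq_mul, smul_eq_mul] at h
    exact hπunit.mul_left_cancel h
  -- every element becomes b ⊗ 1 after multiplying by a power of π
  have hsurj : ∀ x : B ⊗[R] FractionRing R,
      ∃ (n : ℕ) (b : B), π ^ n • x = b ⊗ₜ[R] (1 : FractionRing R) := by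
    intro x
    obtain ⟨⟨b, s⟩, hbs⟩ := IsLocalizedModule.surj (nonZeroDivisors R)
      (TensorProduct.mk R (FractionRing R) B 1) (TensorProduct.comm R B (FractionRing R) x)
    obtain ⟨n, u, hu⟩ := IsDiscreteValuationRing.eq_unit_mul_pow_irreducible
      (nonZeroDivisors.coe_ne_zero s) hπ
    have hbs0 : (s : R) • (TensorProduct.comm R B (FractionRing R)) x = (1 : FractionRing R) ⊗ₜ[R] b := by
      simpa [Submonoid.smul_def, TensorProduct.mk_apply] using hbs
    have hbs' : (s : R) • x = b ⊗ₜ[R] (1 : FractionRing R) := by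
      have h2 := congrArg (TensorProduct.comm R B (FractionRing R)).symm hbs0
      rwa [map_smul, LinearEquiv.symm_apply_apply, TensorProduct.comm_symm_tmul] at h2
    refine ⟨n, (↑u⁻¹ : R) • b, ?_⟩
    have h1 : ((u : R) * π ^ n) • x = b ⊗ₜ[R] (1 : FractionRing R) := by rw [← hu]; exact hbs'
    have h2 := congrArg (fun z => (↑u⁻¹ : R) • z) h1
    simp only [smul_smul, ← mul_assoc, Units.inv_mul, one_mul] at h2
    rw [h2, TensorProduct.smul_tmul']
  -- key descent: idempotents come from B
  have hdesc : ∀ (n : ℕ) (x : B ⊗[R] FractionRing R), IsIdempotentElem x →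
      (∃ b : B, π ^ n • x = b ⊗ₜ[R] (1 : FractionRing R)) →
      ∃ c : B, x = c ⊗ₜ[R] (1 : FractionRing R) := by
    intro n
    induction n with
    | zero => intro x _ ⟨b, hb⟩; exact ⟨b, by simpa using hb⟩
    | succ n ih =>
      rintro x hx ⟨b, hb⟩
      -- b² = π^(n+1) • b
      have hb2 : (b * b) ⊗ₜ[R] (1 : FractionRing R)
          = (π ^ (n + 1) • b) ⊗ₜ[R] (1 : FractionRing R) := by
        have e1 : (b * b) ⊗ₜ[R] (1 : FractionRing R)
            = (π ^ (n + 1) • x) * (π ^ (n + 1) • x) := by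
          rw [hb, Algebra.TensorProduct.tmul_mul_tmul, one_mul]
        rw [e1, smul_mul_smul_comm, hx.eq, ← smul_smul, hb, TensorProduct.smul_tmul']
      have hb2' : b * b = π ^ (n + 1) • b := hinj' _ _ hb2
      -- reduce mod π : b is divisible by π
      have hmem : b ∈ Ideal.span {algebraMap R B π} := by
        have hq : (Ideal.Quotient.mk (Ideal.span {algebraMap R B π}) b) ^ 2 = 0 := by
          rw [pow_two, ← map_mul, hb2', pow_succ, mul_comm (π ^ n) π, ← smul_smul,
            Algebra.smul_def]
          refine Ideal.Quotient.eq_zero_iff_mem.mpr ?_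
          exact Ideal.mul_mem_right _ _ (Ideal.subset_span rfl)
        have h0 := IsReduced.eq_zero _ ⟨2, hq⟩
        exact Ideal.Quotient.eq_zero_iff_mem.mp h0
      obtain ⟨c, hc⟩ := Ideal.mem_span_singleton'.mp hmem
      -- cancel one π
      have hbc : b ⊗ₜ[R] (1 : FractionRing R) = π • (c ⊗ₜ[R] (1 : FractionRing R)) := by
        rw [TensorProduct.smul_tmul', Algebra.smul_def,
          mul_comm ((algebraMap R B) π) c, hc]
      have hcan : π ^ n • x = c ⊗ₜ[R] (1 : FractionRing R) := by
        apply hcancel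
        rw [smul_smul, ← pow_succ', hb, hbc]
      exact ih x hx ⟨c, hcan⟩
  -- now assemble the bijection
  refine ⟨?_, ?_, ?_⟩
  · intro b hb
    show IsIdempotentElem (b ⊗ₜ[R] (1 : FractionRing R))
    show (b ⊗ₜ[R] (1 : FractionRing R)) * (b ⊗ₜ[R] (1 : FractionRing R))
      = b ⊗ₜ[R] (1 : FractionRing R)
    rw [Algebra.TensorProduct.tmul_mul_tmul, hb.eq, one_mul]
  · intro b _ c _ h
    exact hinj' b c h
  · rintro x hx
    obtain ⟨n, b, hb⟩ := hsurj x
    obtain ⟨c, hc⟩ := hdesc n x hx ⟨b, hb⟩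
    refine ⟨c, ?_, hc.symm⟩
    show IsIdempotentElem c
    apply hinj'
    have h1 : (c * c) ⊗ₜ[R] (1 : FractionRing R) = x * x := by
      rw [hc, Algebra.TensorProduct.tmul_mul_tmul, one_mul]
    rw [h1, hx.eq, hc]
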